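/- Let α : R → R′ be a map that is simultaneously a unital ring homomorphism and antihomomorphism. Then the image α(R) is a commutative subring of R′, and for every X ∈ GL₂(R) one has (det X^{α∗}) · X^{α∗∗} = X^{α∗}, where α∗ is the entrywise map and α∗∗(X) = E(0)⁻¹·((X⁻¹)ᵀ)^α·E(0). -/

import Mathlib

/-- If `α : R → R'` is simultaneously a unital ring homomorphism and an
antihomomorphism, then the image `α(R)` is commutative, and for every
`X ∈ GL₂(R)` one has `(det X^{α∗}) · X^{α∗∗} = X^{α∗}`. -/
theorem hom_and_antihom_det_relation (R R' : Type*) [Ring R] [Ring R'] (α : R → R')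
    (hadd : ∀ x y : R, α (x + y) = α x + α y) (hone : α 1 = 1)
    (hhom : ∀ x y : R, α (x * y) = α x * α y)
    (hanti : ∀ x y : R, α (x * y) = α y * α x) :
    (∀ a ∈ Set.range α, ∀ b ∈ Set.range α, a * b = b * a) ∧
      ∀ X : (Matrix (Fin 2) (Fin 2) R)ˣ,
        let A : Matrix (Fin 2) (Fin 2) R' := (X.val).map α
        (A 0 0 * A 1 1 - A 0 1 * A 1 0) •
            (!![0, -1; 1, 0] *
              ((X⁻¹).val.transpose).map α * !![0, 1; -1, 0]) = A := by
  have hzero : α 0 = 0 := by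
    have h := hadd 0 0
    rw [add_zero] at h
    exact (left_eq_add.mp h)
  have hcomm : ∀ x y : R, α x * α y = α y * α x := by
    intro x y; rw [← hhom, hanti]
  constructor
  · rintro a ⟨x, rfl⟩ b ⟨y, rfl⟩
    exact hcomm x y
  · intro X
    set f : R →+* R' :=
      { toFun := α, map_one' := hone, map_mul' := hhom,
        map_zero' := hzero, map_add' := hadd } with hf
    letI : CommRing f.range :=
      { (inferInstance : Ring f.range) with
        mul_comm := by
          rintro ⟨a, x, rfl⟩ ⟨b, y, rfl⟩
          exact Subtype.ext (hcomm x y) }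
    set g : R →+* f.range := f.rangeRestrict with hg
    set ι : f.range →+* R' := f.range.subtype with hι
    set Y : (Matrix (Fin 2) (Fin 2) f.range)ˣ :=
      Units.map (RingHom.mapMatrix g).toMonoidHom X with hY
    set M : Matrix (Fin 2) (Fin 2) f.range := Y.val with hM
    have hMval : M = X.val.map g := rfl
    have hdetM : IsUnit M.det := (Matrix.isUnit_iff_isUnit_det M).mp Y.isUnit
    have hYinv : (X⁻¹).val.map g = M⁻¹ := by
      have : ((Y⁻¹ : (Matrix (Fin 2) (Fin 2) f.range)ˣ) :
          Matrix (Fin 2) (Fin 2) f.range) = (X⁻¹).val.map g := by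
        rw [← map_inv]; rfl
      rw [← this, Matrix.coe_units_inv]
    -- key identity over the commutative ring f.range
    have hadjeq : (!![0,-1;1,0] : Matrix (Fin 2) (Fin 2) f.range) * (M⁻¹).transpose * !![0,1;-1,0]
        = (M⁻¹).adjugate := by
      rw [Matrix.adjugate_fin_two]
      ext i j
      fin_cases i <;> fin_cases j <;>
        simp [Matrix.mul_apply, Matrix.vecMul, dotProduct, Fin.sum_univ_two]
    have key : M.det • ((!![0,-1;1,0] : Matrix (Fin 2) (Fin 2) f.range) * (M⁻¹).transpose *
        !![0,1;-1,0]) = M := by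
      rw [hadjeq]
      have h1 : M⁻¹ * (M⁻¹).adjugate = (M⁻¹).det • 1 := Matrix.mul_adjugate _
      have h2 : M * (M⁻¹ * (M⁻¹).adjugate) = M * ((M⁻¹).det • 1) := by rw [h1]
      rw [← mul_assoc, Matrix.mul_nonsing_inv M hdetM, one_mul] at h2
      rw [h2, Matrix.mul_smul, mul_one, smul_smul, ← Matrix.det_mul,
        Matrix.mul_nonsing_inv M hdetM, Matrix.det_one, one_smul]
    -- transfer to R'
    have hmapmap : ∀ N : Matrix (Fin 2) (Fin 2) R, (N.map g).map ι = N.map α := by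
      intro N
      rw [Matrix.map_map]
      rfl
    have hE1 : (!![0, -1; 1, 0] : Matrix (Fin 2) (Fin 2) R')
        = (!![0,-1;1,0] : Matrix (Fin 2) (Fin 2) f.range).map ι := by
      ext i j
      fin_cases i <;> fin_cases j <;> simp
    have hE2 : (!![0, 1; -1, 0] : Matrix (Fin 2) (Fin 2) R')
        = (!![0,1;-1,0] : Matrix (Fin 2) (Fin 2) f.range).map ι := by
      ext i j
      fin_cases i <;> fin_cases j <;> simp
    have hT : ((X⁻¹).val.transpose).map α = ((M⁻¹).transpose).map ι := by
      rw [← hYinv, ← hmapmap, Matrix.transpose_map]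
    have hdet : ((X.val.map α) 0 0 * (X.val.map α) 1 1
        - (X.val.map α) 0 1 * (X.val.map α) 1 0) = ι M.det := by
      rw [Matrix.det_fin_two, map_sub, map_mul, map_mul]
      rfl
    have hsmul : ∀ (c : f.range) (N : Matrix (Fin 2) (Fin 2) f.range),
        ι c • (N.map ι) = (c • N).map ι := by
      intro c N
      ext i j
      simp [Matrix.map_apply]
    show ((X.val.map α) 0 0 * (X.val.map α) 1 1
        - (X.val.map α) 0 1 * (X.val.map α) 1 0) •
          (!![0, -1; 1, 0] * ((X⁻¹).val.transpose).map α * !![0, 1; -1, 0])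
        = X.val.map α
    rw [hdet, hT, hE1, hE2, ← Matrix.map_mul, ← Matrix.map_mul, hsmul, key, hMval, hmapmap]
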